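/- Let ψ : ℝ → ℝ be twice continuously differentiable, and let X, Y ∈ ℝ^{N×N} satisfy Xᵀ = X, X² = X, tr(X) = r and Yᵀ = Y, Y² = Y, tr(Y) = r (i.e. X, Y lie on the Grassmann manifold G_r(N)). For each pair 1 ≤ i < j ≤ N define f_{ij}(t,t') := ψ(‖exp(t·ℰ_{ij}) X exp(t·ℰ_{ij})ᵀ − exp(t'·ℰ_{ij}) Y exp(t'·ℰ_{ij})ᵀ‖²_F), where exp is the matrix exponential. Then the sum over all pairs (i,j) with 1 ≤ i < j ≤ N of the mixed partial derivative −∂²f_{ij}/∂t∂t' evaluated at (t,t') = (0,0) equals 2·ψ'(‖X−Y‖²_F)·(N·tr(XY) − r²) + 4·ψ''(‖X−Y‖²_F)·‖XY − YX‖²_F. -/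

import Mathlib

open Matrix BigOperators

/-- `ℰ_{ij} = (√2/2)(E_{ij} − E_{ji})` where `E_{ij}` is the matrix with a `1`
in entry `(i,j)` and `0` elsewhere. -/
noncomputable def calE (N : ℕ) (i j : Fin N) : Matrix (Fin N) (Fin N) ℝ :=
  (Real.sqrt 2 / 2) • (Matrix.single i j (1 : ℝ) - Matrix.single j i (1 : ℝ))

/-- The Frobenius inner product `⟨A,B⟩_F = tr(Aᵀ B)`. -/
noncomputable def frob {N r : ℕ} (A B : Matrix (Fin N) (Fin r) ℝ) : ℝ := (Aᵀ * B).trace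

/-- The squared Frobenius norm `‖A‖²_F = ⟨A,A⟩_F`. -/
noncomputable def frobSq {N r : ℕ} (A : Matrix (Fin N) (Fin r) ℝ) : ℝ := frob A A

/- ### Auxiliary material -/

theorem sum_ite_ite {α : Type*} [Fintype α] [DecidableEq α] (p : Prop) [Decidable p]
    (j : α) (f : α → ℝ) :
    (∑ x : α, if p then (if j = x then f x else 0) else 0) = if p then f j else 0 := by
  split <;> simp

theorem sum_ite_const {α : Type*} [Fintype α] (p : Prop) [Decidable p] (f : α → ℝ) :
    (∑ x : α, if p then f x else 0) = if p then (∑ x, f x) else 0 := by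
  split <;> simp

theorem calE_transpose (N : ℕ) (i j : Fin N) : (calE N i j)ᵀ = -calE N i j := by
  ext a b
  simp only [calE, Matrix.transpose_apply, Matrix.smul_apply, Matrix.sub_apply,
    Matrix.neg_apply, Matrix.single, Matrix.of_apply, smul_eq_mul]
  rcases eq_or_ne i b with h1|h1 <;> rcases eq_or_ne j a with h2|h2 <;>
    rcases eq_or_ne i a with h3|h3 <;> rcases eq_or_ne j b with h4|h4 <;>
      simp [h1, h2, h3, h4, and_comm] <;> ring

/-- `frobSq` of a symmetric matrix is the trace of its square. -/
theorem frobSq_of_symm {N : ℕ} (M : Matrix (Fin N) (Fin N) ℝ) (h : Mᵀ = M) :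
    frobSq M = (M * M).trace := by
  rw [frobSq, frob, h]

theorem conj_symm {N : ℕ} (P X : Matrix (Fin N) (Fin N) ℝ) (hX : Xᵀ = X) :
    (P * X * Pᵀ)ᵀ = P * X * Pᵀ := by
  rw [Matrix.transpose_mul, Matrix.transpose_mul, Matrix.transpose_transpose, hX, Matrix.mul_assoc]

/-- first key trace computation, X version -/
theorem trace_key1X {N : ℕ} (X Y : Matrix (Fin N) (Fin N) ℝ) (i j : Fin N)
    (hXs : Xᵀ = X) (hYs : Yᵀ = Y) :
    ((X - Y) * (calE N i j * X - X * calE N i j)).trace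
      = Real.sqrt 2 * ((X * Y - Y * X) i j) := by
  have h2 : Real.sqrt 2 * Real.sqrt 2 = 2 := Real.mul_self_sqrt (by norm_num)
  have hX : ∀ a b, X a b = X b a := fun a b => by conv_lhs => rw [← hXs, Matrix.transpose_apply]
  have hY : ∀ a b, Y a b = Y b a := fun a b => by conv_lhs => rw [← hYs, Matrix.transpose_apply]
  simp only [Matrix.trace, Matrix.diag, Matrix.mul_apply, Matrix.sub_apply, calE,
    Matrix.smul_apply, Matrix.single, Matrix.of_apply, smul_eq_mul,
    mul_ite, ite_mul, mul_zero, zero_mul, mul_one, one_mul, mul_sub, sub_mul,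
    Finset.sum_sub_distrib, Finset.sum_ite_eq, Finset.sum_ite_eq', Finset.mem_univ, if_true,
    ite_and, sum_ite_ite, sum_ite_const]
  simp only [fun x => hX x i, fun x => hX x j, fun x => hY x i, fun x => hY x j]
  simp only [Finset.mul_sum, ← Finset.sum_sub_distrib]
  exact Finset.sum_congr rfl (fun x _ => by ring)

/-- first key trace computation, Y version -/
theorem trace_key1Y {N : ℕ} (X Y : Matrix (Fin N) (Fin N) ℝ) (i j : Fin N)
    (hXs : Xᵀ = X) (hYs : Yᵀ = Y) :
    ((X - Y) * (calE N i j * Y - Y * calE N i j)).trace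
      = Real.sqrt 2 * ((X * Y - Y * X) i j) := by
  have h2 : Real.sqrt 2 * Real.sqrt 2 = 2 := Real.mul_self_sqrt (by norm_num)
  have hX : ∀ a b, X a b = X b a := fun a b => by conv_lhs => rw [← hXs, Matrix.transpose_apply]
  have hY : ∀ a b, Y a b = Y b a := fun a b => by conv_lhs => rw [← hYs, Matrix.transpose_apply]
  simp only [Matrix.trace, Matrix.diag, Matrix.mul_apply, Matrix.sub_apply, calE,
    Matrix.smul_apply, Matrix.single, Matrix.of_apply, smul_eq_mul,
    mul_ite, ite_mul, mul_zero, zero_mul, mul_one, one_mul, mul_sub, sub_mul,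
    Finset.sum_sub_distrib, Finset.sum_ite_eq, Finset.sum_ite_eq', Finset.mem_univ, if_true,
    ite_and, sum_ite_ite, sum_ite_const]
  simp only [fun x => hX x i, fun x => hX x j, fun x => hY x i, fun x => hY x j]
  simp only [Finset.mul_sum, ← Finset.sum_sub_distrib]
  exact Finset.sum_congr rfl (fun x _ => by ring)

/-- second key trace computation -/
theorem trace_key2 {N : ℕ} (X Y : Matrix (Fin N) (Fin N) ℝ) (i j : Fin N) (hij : i ≠ j)
    (hXs : Xᵀ = X) (hYs : Yᵀ = Y) :
    ((calE N i j * X - X * calE N i j) * (calE N i j * Y - Y * calE N i j)).trace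
      = 2*(X i j)*(Y i j) - (X i i)*(Y j j) - (X j j)*(Y i i)
        + (1/2)*((X*Y) i i + (Y*X) i i + (X*Y) j j + (Y*X) j j) := by
  have h2 : Real.sqrt 2 * Real.sqrt 2 = 2 := Real.mul_self_sqrt (by norm_num)
  have hX : ∀ a b, X a b = X b a := fun a b => by conv_lhs => rw [← hXs, Matrix.transpose_apply]
  have hY : ∀ a b, Y a b = Y b a := fun a b => by conv_lhs => rw [← hYs, Matrix.transpose_apply]
  simp only [Matrix.trace, Matrix.diag, Matrix.mul_apply, Matrix.sub_apply, calE,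
    Matrix.smul_apply, Matrix.single, Matrix.of_apply, smul_eq_mul,
    mul_ite, ite_mul, mul_zero, zero_mul, mul_one, one_mul, mul_sub, sub_mul,
    Finset.sum_sub_distrib, Finset.sum_ite_eq, Finset.sum_ite_eq', Finset.mem_univ, if_true,
    ite_and, sum_ite_ite, sum_ite_const]
  simp only [if_neg hij, if_neg (Ne.symm hij)]
  have hA1 : (∑ x : Fin N, X x j * (Real.sqrt 2 / 2) * (Real.sqrt 2 / 2 * Y j x))
      = (1/2) * ∑ x : Fin N, Y j x * X x j := by
    rw [Finset.mul_sum]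
    exact Finset.sum_congr rfl fun x _ => by linear_combination (X x j * Y j x / 4) * h2
  have hA2 : (∑ x : Fin N, X x i * (Real.sqrt 2 / 2) * (Real.sqrt 2 / 2 * Y i x))
      = (1/2) * ∑ x : Fin N, Y i x * X x i := by
    rw [Finset.mul_sum]
    exact Finset.sum_congr rfl fun x _ => by linear_combination (X x i * Y i x / 4) * h2
  have hA3 : (∑ x : Fin N, Real.sqrt 2 / 2 * X i x * (Y x i * (Real.sqrt 2 / 2)))
      = (1/2) * ∑ x : Fin N, X i x * Y x i := by
    rw [Finset.mul_sum]
    exact Finset.sum_congr rfl fun x _ => by linear_combination (X i x * Y x i / 4) * h2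
  have hA4 : (∑ x : Fin N, Real.sqrt 2 / 2 * X j x * (Y x j * (Real.sqrt 2 / 2)))
      = (1/2) * ∑ x : Fin N, X j x * Y x j := by
    rw [Finset.mul_sum]
    exact Finset.sum_congr rfl fun x _ => by linear_combination (X j x * Y x j / 4) * h2
  have hB2 : (∑ x : Fin N, Y i x * X x i) = ∑ x : Fin N, X i x * Y x i :=
    Finset.sum_congr rfl fun x _ => by rw [hX i x, hY x i]; ring
  have hB4 : (∑ x : Fin N, Y j x * X x j) = ∑ x : Fin N, X j x * Y x j :=
    Finset.sum_congr rfl fun x _ => by rw [hX j x, hY x j]; ring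
  rw [hA1, hA2, hA3, hA4, hB2, hB4, hX j i, hY j i]
  set S1 := ∑ x : Fin N, X i x * Y x i
  set S2 := ∑ x : Fin N, X j x * Y x j
  linear_combination (X i j * Y i j - X i i * Y j j / 2 - X j j * Y i i / 2) * h2

open NormedSpace in
theorem key_deriv {N : ℕ} (ψ : ℝ → ℝ) (hψ : ContDiff ℝ 2 ψ)
    (X Y E : Matrix (Fin N) (Fin N) ℝ)
    (hXs : Xᵀ = X) (hYs : Yᵀ = Y) (hE : Eᵀ = -E) :
    deriv (fun t : ℝ => deriv (fun t' : ℝ =>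
      ψ ((((exp (t • E) * X * (exp (t • E))ᵀ -
                 exp (t' • E) * Y * (exp (t' • E))ᵀ)) *
          ((exp (t • E) * X * (exp (t • E))ᵀ -
                 exp (t' • E) * Y * (exp (t' • E))ᵀ))).trace)) 0) 0
    = deriv (deriv ψ) (((X - Y) * (X - Y)).trace)
        * (2 * ((X - Y) * (E*X - X*E)).trace) * (-2 * ((X - Y) * (E*Y - Y*E)).trace)
      + deriv ψ (((X - Y) * (X - Y)).trace) * (-2 * (((E*X - X*E) * (E*Y - Y*E)).trace)) := by
  letI : NormedRing (Matrix (Fin N) (Fin N) ℝ) := Matrix.linftyOpNormedRing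
  letI : NormedAlgebra ℝ (Matrix (Fin N) (Fin N) ℝ) := Matrix.linftyOpNormedAlgebra
  letI : CompleteSpace (Matrix (Fin N) (Fin N) ℝ) := inferInstance
  -- abbreviations
  set A : ℝ → Matrix (Fin N) (Fin N) ℝ := fun t => exp (t • E) * X * (exp (t • E))ᵀ with hA
  set B : ℝ → Matrix (Fin N) (Fin N) ℝ := fun t => exp (t • E) * Y * (exp (t • E))ᵀ with hB
  -- transpose of exp
  have hPt : ∀ s : ℝ, (exp (s • E))ᵀ = exp ((-s) • E) := by
    intro s
    rw [← Matrix.exp_transpose, Matrix.transpose_smul, hE]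
    congr 1
    module
  have hψ1 : Differentiable ℝ ψ := hψ.differentiable (by norm_num)
  have hψ2 : Differentiable ℝ (deriv ψ) := by
    have h : ContDiff ℝ ((1:ℕ)+1) ψ := by exact_mod_cast hψ
    exact ((contDiff_succ_iff_deriv.mp h).2.2).differentiable (by simp)
  -- derivative of conjugation curves at 0
  have hconj : ∀ Z : Matrix (Fin N) (Fin N) ℝ,
      HasDerivAt (fun s : ℝ => exp (s • E) * Z * (exp (s • E))ᵀ) (E * Z - Z * E) 0 := by
    intro Z
    have h1 : HasDerivAt (fun s : ℝ => exp (s • E)) E 0 := by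
      have h := hasDerivAt_exp_smul_const (𝕂 := ℝ) E (0:ℝ)
      simp at h
      exact h
    have h2 : HasDerivAt (fun s : ℝ => (exp (s • E))ᵀ) (-E) 0 := by
      have hneg : HasDerivAt (fun s : ℝ => -s) (-1 : ℝ) 0 := hasDerivAt_neg 0
      have h := (hasDerivAt_exp_smul_const (𝕂 := ℝ) E (-(0:ℝ))).scomp (0:ℝ) hneg
      simp only [Function.comp_def, neg_smul, neg_zero, zero_smul, exp_zero, one_mul,
        one_smul, neg_one_smul] at h
      have heq : (fun s : ℝ => (exp (s • E))ᵀ) = fun s : ℝ => exp (-(s • E)) := by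
        funext s; rw [hPt s, neg_smul]
      rw [heq]
      exact h
    have := ((h1.mul_const Z).mul h2)
    simp at this
    simp only [Pi.mul_def] at this
    rw [sub_eq_add_neg]
    exact this
  -- trace composition
  have htr : ∀ {M : ℝ → Matrix (Fin N) (Fin N) ℝ} {M' : Matrix (Fin N) (Fin N) ℝ} {t : ℝ},
      HasDerivAt M M' t → HasDerivAt (fun s => (M s).trace) M'.trace t := by
    intro M M' t h
    exact
      ((Matrix.traceLinearMap (Fin N) ℝ ℝ).toContinuousLinearMap.hasFDerivAt.comp_hasDerivAt t h)
  have hA0 : A 0 = X := by simp [hA]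
  have hB0 : B 0 = Y := by simp [hB]
  have tralg : ∀ M L : Matrix (Fin N) (Fin N) ℝ,
      ((0 - L) * M + M * (0 - L)).trace = -2 * (M * L).trace := by
    intro M L
    rw [Matrix.trace_add, zero_sub, Matrix.neg_mul, Matrix.mul_neg, Matrix.trace_neg,
      Matrix.trace_neg, Matrix.trace_mul_comm]
    ring
  have tralg2 : ∀ M L : Matrix (Fin N) (Fin N) ℝ,
      (L * M + M * L).trace = 2 * (M * L).trace := by
    intro M L
    rw [Matrix.trace_add, Matrix.trace_mul_comm]
    ring
  -- inner derivative
  have hinner : ∀ t : ℝ,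
      deriv (fun t' : ℝ => ψ (((A t - B t') * (A t - B t')).trace)) 0
        = deriv ψ (((A t - Y) * (A t - Y)).trace)
            * (-2 * ((A t - Y) * (E * Y - Y * E)).trace) := by
    intro t
    have hMB : HasDerivAt (fun t' : ℝ => A t - B t') (0 - (E * Y - Y * E)) 0 :=
      (hasDerivAt_const 0 (A t)).sub (hconj Y)
    have hprod := htr (hMB.mul hMB)
    have hψat : HasDerivAt ψ (deriv ψ (((A t - B 0) * (A t - B 0)).trace))
        (((A t - B 0) * (A t - B 0)).trace) := (hψ1 _).hasDerivAt
    have hcomp := hψat.comp 0 hprod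
    have := hcomp.deriv
    simp only [Function.comp_def, Pi.mul_apply] at this
    rw [this, hB0, tralg]
  have hfun : (fun t : ℝ => deriv (fun t' : ℝ => ψ (((A t - B t') * (A t - B t')).trace)) 0)
      = fun t : ℝ => deriv ψ (((A t - Y) * (A t - Y)).trace)
          * (-2 * ((A t - Y) * (E * Y - Y * E)).trace) := funext hinner
  rw [hfun]
  -- outer derivative
  have hAder : HasDerivAt (fun t : ℝ => A t - Y) (E * X - X * E) 0 := by
    exact (hconj X).sub_const Y
  have hu : HasDerivAt (fun t : ℝ => ((A t - Y) * (A t - Y)).trace)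
      (2 * ((X - Y) * (E * X - X * E)).trace) 0 := by
    have h := htr (hAder.mul hAder)
    rw [hA0, tralg2] at h
    exact h
  have hv : HasDerivAt (fun t : ℝ => ((A t - Y) * (E * Y - Y * E)).trace)
      (((E * X - X * E) * (E * Y - Y * E)).trace) 0 := by
    have h := htr (hAder.mul_const (E * Y - Y * E))
    exact h
  have hd : HasDerivAt (fun t : ℝ => deriv ψ (((A t - Y) * (A t - Y)).trace))
      (deriv (deriv ψ) (((A 0 - Y) * (A 0 - Y)).trace)
        * (2 * ((X - Y) * (E * X - X * E)).trace)) 0 := by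
    have := ((hψ2 _).hasDerivAt).comp 0 hu
    simpa [Function.comp_def] using this
  have hw : HasDerivAt (fun t : ℝ => -2 * ((A t - Y) * (E * Y - Y * E)).trace)
      (-2 * ((E * X - X * E) * (E * Y - Y * E)).trace) 0 := hv.const_mul (-2)
  have htot := (hd.mul hw).deriv
  simp only [Pi.mul_def] at htot
  rw [htot, hA0]

theorem sum_pairs {N : ℕ} (g : Fin N → Fin N → ℝ) (hg : ∀ i j, g i j = g j i) :
    ∑ i : Fin N, ∑ j : Fin N, (if i < j then g i j else 0)
      = (1/2) * ((∑ i : Fin N, ∑ j : Fin N, g i j) - ∑ i : Fin N, g i i) := by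
  have key : ∀ i j : Fin N, g i j =
      (if i < j then g i j else 0) + (if j < i then g i j else 0)
        + (if i = j then g i j else 0) := by
    intro i j
    rcases lt_trichotomy i j with h|h|h
    · simp [h, h.ne, asymm h]
    · simp [h, lt_irrefl]
    · simp [h, h.ne', asymm h]
  have hsum : (∑ i : Fin N, ∑ j : Fin N, g i j)
      = (∑ i : Fin N, ∑ j : Fin N, (if i < j then g i j else 0))
        + (∑ i : Fin N, ∑ j : Fin N, (if j < i then g i j else 0))
        + (∑ i : Fin N, ∑ j : Fin N, (if i = j then g i j else 0)) := by
    simp_rw [← Finset.sum_add_distrib]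
    exact Finset.sum_congr rfl fun i _ => Finset.sum_congr rfl fun j _ => key i j
  have hswap : (∑ i : Fin N, ∑ j : Fin N, (if j < i then g i j else 0))
      = ∑ i : Fin N, ∑ j : Fin N, (if i < j then g i j else 0) := by
    rw [Finset.sum_comm]
    exact Finset.sum_congr rfl fun i _ => Finset.sum_congr rfl fun j _ => by
      by_cases h : i < j <;> simp [h, hg i j]
  have hdiag : (∑ i : Fin N, ∑ j : Fin N, (if i = j then g i j else 0))
      = ∑ i : Fin N, g i i := by
    simp
  rw [hswap, hdiag] at hsum
  linarith

theorem sum_eval {N r : ℕ} (X Y : Matrix (Fin N) (Fin N) ℝ) (d1 d2 : ℝ)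
    (hXs : Xᵀ = X) (hYs : Yᵀ = Y) (hXr : X.trace = (r : ℝ)) (hYr : Y.trace = (r : ℝ)) :
    (1/2) * ((∑ i : Fin N, ∑ j : Fin N,
        (2*d1*(2*(X i j)*(Y i j) - (X i i)*(Y j j) - (X j j)*(Y i i)
          + (1/2)*((X*Y) i i + (Y*X) i i + (X*Y) j j + (Y*X) j j))
          + 8*d2*((X*Y - Y*X) i j)^2))
      - ∑ i : Fin N,
        (2*d1*(2*(X i i)*(Y i i) - (X i i)*(Y i i) - (X i i)*(Y i i)
          + (1/2)*((X*Y) i i + (Y*X) i i + (X*Y) i i + (Y*X) i i))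
          + 8*d2*((X*Y - Y*X) i i)^2))
      = 2 * d1 * ((N : ℝ) * (X * Y).trace - (r : ℝ) ^ 2)
        + 4 * d2 * frobSq (X * Y - Y * X) := by
  have hY : ∀ a b, Y a b = Y b a := fun a b => by conv_lhs => rw [← hYs, Matrix.transpose_apply]
  have L1 : ∑ i : Fin N, ∑ j : Fin N, X i j * Y i j = (X*Y).trace := by
    simp only [Matrix.trace, Matrix.diag, Matrix.mul_apply]
    exact Finset.sum_congr rfl fun i _ => Finset.sum_congr rfl fun j _ => by rw [hY i j]
  have L2 : (∑ i : Fin N, X i i) * (∑ j : Fin N, Y j j) = (r:ℝ)^2 := by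
    have : X.trace = ∑ i : Fin N, X i i := rfl
    rw [← this, hXr]
    have : Y.trace = ∑ j : Fin N, Y j j := rfl
    rw [← this, hYr]; ring
  have L4 : ∑ i : Fin N, (X*Y) i i = (X*Y).trace := rfl
  have L5 : (Y*X).trace = (X*Y).trace := Matrix.trace_mul_comm Y X
  have L8 : ∑ i : Fin N, ∑ j : Fin N, ((X*Y - Y*X) i j)^2 = frobSq (X*Y - Y*X) := by
    simp only [frobSq, frob, Matrix.trace, Matrix.diag, Matrix.mul_apply,
      Matrix.transpose_apply, sq]
    rw [Finset.sum_comm]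
  have L9 : ∀ i, (X*Y - Y*X) i i = (X*Y) i i - (Y*X) i i := fun i => rfl
  -- expand
  simp only [Finset.sum_add_distrib, Finset.sum_sub_distrib, ← Finset.mul_sum,
    ← Finset.sum_mul, Finset.sum_const, Finset.card_univ, Fintype.card_fin, nsmul_eq_mul,
    mul_add, mul_sub, add_mul, sub_mul]
  have L1' : (∑ i : Fin N, ∑ j : Fin N, 2 * X i j * Y i j) = 2 * (X*Y).trace := by
    rw [← L1, Finset.mul_sum]
    exact Finset.sum_congr rfl fun i _ => by
      rw [Finset.mul_sum]; exact Finset.sum_congr rfl fun j _ => by ring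
  have L5' : (∑ i : Fin N, (Y*X) i i) = (X*Y).trace := L5
  have L10 : (∑ i : Fin N, 2 * X i i * Y i i) = 2 * ∑ i : Fin N, X i i * Y i i := by
    rw [Finset.mul_sum]; exact Finset.sum_congr rfl fun i _ => by ring
  have hX : ∀ a b, X a b = X b a := fun a b => by conv_lhs => rw [← hXs, Matrix.transpose_apply]
  have L11 : ∀ i, (X*Y - Y*X) i i = 0 := by
    intro i
    simp only [Matrix.sub_apply, Matrix.mul_apply, sub_eq_zero]
    exact Finset.sum_congr rfl fun k _ => by rw [hX i k, hY k i]; ring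
  have L12 : (∑ i : Fin N, ((X*Y - Y*X) i i)^2) = 0 := by simp [L11]
  rw [L1', L2, L4, L5', L8, L10, L12]
  ring

theorem stmt_13 (N r : ℕ) (ψ : ℝ → ℝ) (hψ : ContDiff ℝ 2 ψ)
    (X Y : Matrix (Fin N) (Fin N) ℝ)
    (hXs : Xᵀ = X) (hXp : X * X = X) (hXr : X.trace = (r : ℝ))
    (hYs : Yᵀ = Y) (hYp : Y * Y = Y) (hYr : Y.trace = (r : ℝ))
    (f : Fin N → Fin N → ℝ → ℝ → ℝ)
    (hf : ∀ i j t t', f i j t t' =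
      ψ (frobSq (NormedSpace.exp (t • calE N i j) * X * (NormedSpace.exp (t • calE N i j))ᵀ -
                 NormedSpace.exp (t' • calE N i j) * Y * (NormedSpace.exp (t' • calE N i j))ᵀ))) :
    ∑ i : Fin N, ∑ j : Fin N,
      (if i < j then -(deriv (fun t => deriv (fun t' => f i j t t') 0) 0) else 0)
      = 2 * deriv ψ (frobSq (X - Y)) * ((N : ℝ) * (X * Y).trace - (r : ℝ) ^ 2)
        + 4 * deriv (deriv ψ) (frobSq (X - Y)) * frobSq (X * Y - Y * X) := by
  have h2 : Real.sqrt 2 * Real.sqrt 2 = 2 := Real.mul_self_sqrt (by norm_num)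
  have hfr0 : frobSq (X - Y) = ((X - Y) * (X - Y)).trace :=
    frobSq_of_symm _ (by rw [Matrix.transpose_sub, hXs, hYs])
  have hterm : ∀ i j : Fin N, i < j →
      -(deriv (fun t => deriv (fun t' => f i j t t') 0) 0)
        = 2 * deriv ψ (frobSq (X - Y)) *
            (2*(X i j)*(Y i j) - (X i i)*(Y j j) - (X j j)*(Y i i)
              + (1/2)*((X*Y) i i + (Y*X) i i + (X*Y) j j + (Y*X) j j))
          + 8 * deriv (deriv ψ) (frobSq (X - Y)) * ((X*Y - Y*X) i j)^2 := by
    intro i j hlt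
    have hne : i ≠ j := ne_of_lt hlt
    have hfeq : (fun t : ℝ => deriv (fun t' : ℝ => f i j t t') 0)
        = fun t : ℝ => deriv (fun t' : ℝ =>
            ψ ((((NormedSpace.exp (t • calE N i j) * X * (NormedSpace.exp (t • calE N i j))ᵀ -
                 NormedSpace.exp (t' • calE N i j) * Y * (NormedSpace.exp (t' • calE N i j))ᵀ)) *
                ((NormedSpace.exp (t • calE N i j) * X * (NormedSpace.exp (t • calE N i j))ᵀ -
                 NormedSpace.exp (t' • calE N i j) * Y * (NormedSpace.exp (t' • calE N i j))ᵀ))).trace)) 0 := by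
      funext t
      congr 1
      funext t'
      rw [hf]
      congr 1
      exact frobSq_of_symm _ (by
        rw [Matrix.transpose_sub, conj_symm _ _ hXs, conj_symm _ _ hYs])
    rw [hfeq, key_deriv ψ hψ X Y (calE N i j) hXs hYs (calE_transpose N i j),
        trace_key1X X Y i j hXs hYs, trace_key1Y X Y i j hXs hYs,
        trace_key2 X Y i j hne hXs hYs, ← hfr0]
    linear_combination (4 * deriv (deriv ψ) (frobSq (X - Y)) * ((X*Y - Y*X) i j)^2) * h2
  have hX : ∀ a b, X a b = X b a := fun a b => by conv_lhs => rw [← hXs, Matrix.transpose_apply]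
  have hY : ∀ a b, Y a b = Y b a := fun a b => by conv_lhs => rw [← hYs, Matrix.transpose_apply]
  have hC : ∀ a b, (X*Y - Y*X) a b = -((X*Y - Y*X) b a) := by
    intro a b
    simp only [Matrix.sub_apply, Matrix.mul_apply]
    have e1 : (∑ k, X a k * Y k b) = ∑ k, Y b k * X k a :=
      Finset.sum_congr rfl fun k _ => by rw [hX a k, hY k b]; ring
    have e2 : (∑ k, Y a k * X k b) = ∑ k, X b k * Y k a :=
      Finset.sum_congr rfl fun k _ => by rw [hY a k, hX k b]; ring
    rw [e1, e2]; ring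
  have hstep : ∑ i : Fin N, ∑ j : Fin N,
      (if i < j then -(deriv (fun t => deriv (fun t' => f i j t t') 0) 0) else 0)
      = ∑ i : Fin N, ∑ j : Fin N,
        (if i < j then (fun i j : Fin N =>
          2 * deriv ψ (frobSq (X - Y)) *
            (2*(X i j)*(Y i j) - (X i i)*(Y j j) - (X j j)*(Y i i)
              + (1/2)*((X*Y) i i + (Y*X) i i + (X*Y) j j + (Y*X) j j))
          + 8 * deriv (deriv ψ) (frobSq (X - Y)) * ((X*Y - Y*X) i j)^2) i j else 0) :=
    Finset.sum_congr rfl fun i _ => Finset.sum_congr rfl fun j _ => by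
      by_cases h : i < j
      · rw [if_pos h, if_pos h, hterm i j h]
      · rw [if_neg h, if_neg h]
  rw [hstep, sum_pairs _ (fun i j => by
    rw [hX i j, hY i j, hC i j]
    ring)]
  exact sum_eval X Y (deriv ψ (frobSq (X - Y))) (deriv (deriv ψ) (frobSq (X - Y)))
    hXs hYs hXr hYr
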